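/- C(Δ) is not lattice embeddable into C[0,1], where Δ is the Cantor space (even though C(Δ) is linearly isomorphic to C[0,1] by Miljutin's theorem). -/

import Mathlib

/-- The Cantor space `Δ = 2^ℕ`. -/
abbrev Cantor : Type := ℕ → Bool

open Set Metric Classical in
/-- Indicator of the clopen set `{z : z i = b}` as a continuous function. -/
noncomputable def eInd (i : ℕ) (b : Bool) : C(Cantor, ℝ) :=
  ⟨fun z => if z i = b then 1 else 0, by
    have h1 : Continuous fun z : Cantor => z i := continuous_apply i
    have h2 : Continuous fun c : Bool => if c = b then (1:ℝ) else 0 :=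
      continuous_of_discreteTopology
    exact h2.comp h1⟩

@[simp] lemma eInd_apply (i : ℕ) (b : Bool) (z : Cantor) :
    eInd i b z = if z i = b then 1 else 0 := rfl

lemma eInd_nonneg (i : ℕ) (b : Bool) : (0 : C(Cantor, ℝ)) ≤ eInd i b := by
  rw [ContinuousMap.le_def]
  intro z
  simp only [ContinuousMap.zero_apply, eInd_apply]
  split <;> norm_num

open Classical in
/-- Indicator of the cylinder `{z : ∀ j < n, z j = bit j}`. -/
noncomputable def cylInd (n : ℕ) (bit : Fin n → Bool) : C(Cantor, ℝ) :=
  ⟨fun z => if ∀ j : Fin n, z j.1 = bit j then 1 else 0, by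
    have h1 : Continuous fun z : Cantor => fun j : Fin n => z j.1 :=
      continuous_pi fun j => continuous_apply j.1
    have h2 : Continuous fun v : Fin n → Bool =>
        if ∀ j : Fin n, v j = bit j then (1:ℝ) else 0 :=
      continuous_of_discreteTopology
    exact h2.comp h1⟩

open Classical in
lemma cylInd_apply (n : ℕ) (bit : Fin n → Bool) (z : Cantor) :
    cylInd n bit z = if ∀ j : Fin n, z j.1 = bit j then 1 else 0 := rfl

lemma cylInd_nonneg (n : ℕ) (bit : Fin n → Bool) : (0 : C(Cantor, ℝ)) ≤ cylInd n bit := by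
  rw [ContinuousMap.le_def]
  intro z
  rw [cylInd_apply]
  simp only [ContinuousMap.zero_apply]
  split <;> norm_num

lemma cylInd_le_one (n : ℕ) (bit : Fin n → Bool) : cylInd n bit ≤ 1 := by
  rw [ContinuousMap.le_def]
  intro z
  rw [cylInd_apply]
  simp only [ContinuousMap.one_apply]
  split <;> norm_num

lemma cylInd_le_eInd (n : ℕ) (bit : Fin n → Bool) (j : Fin n) :
    cylInd n bit ≤ eInd j.1 (bit j) := by
  rw [ContinuousMap.le_def]
  intro z
  rw [cylInd_apply]
  simp only [eInd_apply]
  by_cases hz : ∀ k : Fin n, z k.1 = bit k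
  · rw [if_pos hz, if_pos (hz j)]
  · rw [if_neg hz]
    split <;> norm_num

lemma cylInd_norm (n : ℕ) (bit : Fin n → Bool) : ‖cylInd n bit‖ = 1 := by
  classical
  apply le_antisymm
  · rw [ContinuousMap.norm_le _ zero_le_one]
    intro z
    rw [cylInd_apply, Real.norm_eq_abs]
    split <;> norm_num
  · set z0 : Cantor := fun i => if hi : i < n then bit ⟨i, hi⟩ else true with hz0
    have h1 : cylInd n bit z0 = 1 := by
      rw [cylInd_apply, if_pos]
      intro j
      simp [hz0, j.2]
    calc (1:ℝ) = ‖cylInd n bit z0‖ := by rw [h1]; simp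
      _ ≤ ‖cylInd n bit‖ := ContinuousMap.norm_coe_le_norm _ _

open Set Metric in
/-- `C(Δ)` is **not** lattice embeddable into `C[0,1]`: there is no bounded linear
lattice homomorphism `C(Δ) → C[0,1]` which is bounded below. -/
theorem CDelta_not_lattice_embeds_in_C01 :
    ¬ ∃ T : C(Cantor, ℝ) →L[ℝ] C(unitInterval, ℝ),
      (∀ f g : C(Cantor, ℝ), T (f ⊔ g) = T f ⊔ T g) ∧
      (∃ c : ℝ, 0 < c ∧ ∀ f : C(Cantor, ℝ), c * ‖f‖ ≤ ‖T f‖) := by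
  classical
  rintro ⟨T, hsup, c, hc, hlow⟩
  -- T is monotone
  have hmono : ∀ f g : C(Cantor, ℝ), f ≤ g → T f ≤ T g := by
    intro f g hfg
    have h1 := hsup f g
    rw [sup_eq_right.mpr hfg] at h1
    rw [h1]
    exact le_sup_left
  have hpos : ∀ f : C(Cantor, ℝ), 0 ≤ f → ∀ t, 0 ≤ T f t := by
    intro f hf t
    have h1 := hmono 0 f hf
    rw [map_zero] at h1
    exact ContinuousMap.le_def.mp h1 t
  set h : C(unitInterval, ℝ) := T 1 with hh
  -- disjointness: min (T (eInd i b)) (T (eInd i !b)) = 0 pointwise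
  have hkey : ∀ (i : ℕ) (b : Bool) (t : unitInterval),
      min (T (eInd i b) t) (T (eInd i (!b)) t) = 0 := by
    intro i b t
    have hinf : eInd i b ⊓ eInd i (!b) = 0 := by
      ext z
      simp only [ContinuousMap.inf_apply, eInd_apply, ContinuousMap.zero_apply]
      cases hz : z i <;> cases b <;> simp
    have hformula : eInd i b ⊓ eInd i (!b)
        = eInd i b + eInd i (!b) - eInd i b ⊔ eInd i (!b) := by
      ext z
      simp only [ContinuousMap.inf_apply, ContinuousMap.sub_apply, ContinuousMap.add_apply,
        ContinuousMap.sup_apply]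
      have := min_add_max (eInd i b z) (eInd i (!b) z)
      linarith
    have h0 : T (eInd i b) + T (eInd i (!b)) - T (eInd i b) ⊔ T (eInd i (!b)) = 0 := by
      rw [← hsup, ← map_add, ← map_sub, ← hformula, hinf, map_zero]
    have h1 := ContinuousMap.congr_fun h0 t
    simp only [ContinuousMap.sub_apply, ContinuousMap.add_apply, ContinuousMap.sup_apply,
      ContinuousMap.zero_apply] at h1
    have := min_add_max (T (eInd i b) t) (T (eInd i (!b)) t)
    linarith
  -- sum: T (eInd i b) + T (eInd i !b) = h pointwise
  have hsum : ∀ (i : ℕ) (b : Bool) (t : unitInterval),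
      T (eInd i b) t + T (eInd i (!b)) t = h t := by
    intro i b t
    have h1 : eInd i b + eInd i (!b) = 1 := by
      ext z
      simp only [ContinuousMap.add_apply, eInd_apply, ContinuousMap.one_apply]
      cases hz : z i <;> cases b <;> simp
    rw [hh, ← h1, map_add]
    simp
  -- dichotomy via IVT
  have hdich : ∀ (i : ℕ) (b : Bool) (p t : unitInterval) (δ : ℝ),
      (∀ s : unitInterval, s ∈ ball p δ → 0 < h s) → t ∈ ball p δ →
      0 < T (eInd i b) p → T (eInd i (!b)) t ≤ 0 := by
    intro i b p t δ hball ht hp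
    by_contra hcon
    push_neg at hcon
    set F : ℝ → ℝ := fun r =>
      T (eInd i b) (Set.projIcc 0 1 zero_le_one r)
        - T (eInd i (!b)) (Set.projIcc 0 1 zero_le_one r) with hF
    have hFcont : Continuous F := by
      have hproj : Continuous (Set.projIcc (0:ℝ) 1 zero_le_one) := continuous_projIcc
      exact ((T (eInd i b)).continuous.comp hproj).sub
        ((T (eInd i (!b))).continuous.comp hproj)
    have hvp : T (eInd i (!b)) p = 0 := by
      have := hkey i b p
      rcases min_eq_iff.mp this with h1 | h1
      · linarith [h1.1, h1.2]
      · exact h1.1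
    have hut : T (eInd i b) t = 0 := by
      have := hkey i b t
      rcases min_eq_iff.mp this with h1 | h1
      · exact h1.1
      · linarith [h1.1, h1.2]
    have hFp : 0 < F (p : ℝ) := by
      simp only [hF, Set.projIcc_val]
      rw [hvp]
      simpa using hp
    have hFt : F (t : ℝ) < 0 := by
      simp only [hF, Set.projIcc_val]
      rw [hut]
      simpa using hcon
    have h0mem : (0:ℝ) ∈ Set.uIcc (F (p:ℝ)) (F (t:ℝ)) := by
      rw [Set.mem_uIcc]
      right
      exact ⟨le_of_lt hFt, le_of_lt hFp⟩
    obtain ⟨r, hr, hFr⟩ := intermediate_value_uIcc hFcont.continuousOn h0mem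
    have hr01 : r ∈ Set.Icc (0:ℝ) 1 := by
      rw [Set.mem_uIcc] at hr
      constructor
      · rcases hr with ⟨h1, _⟩ | ⟨h1, _⟩ <;> [exact le_trans p.2.1 h1; exact le_trans t.2.1 h1]
      · rcases hr with ⟨_, h2⟩ | ⟨_, h2⟩ <;> [exact le_trans h2 t.2.2; exact le_trans h2 p.2.2]
    set s : unitInterval := ⟨r, hr01⟩ with hs
    have hsball : s ∈ ball p δ := by
      rw [mem_ball, Subtype.dist_eq, Real.dist_eq]
      rw [mem_ball, Subtype.dist_eq, Real.dist_eq] at ht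
      rw [Set.mem_uIcc] at hr
      have : |r - (p:ℝ)| ≤ |(t:ℝ) - (p:ℝ)| := by
        rcases hr with ⟨h1, h2⟩ | ⟨h1, h2⟩
        · rw [abs_of_nonneg (by linarith), abs_of_nonneg (by linarith)]; linarith
        · rw [abs_of_nonpos (by linarith), abs_of_nonpos (by linarith)]; linarith
      exact lt_of_le_of_lt this ht
    have hFs : F r = 0 := hFr ▸ rfl
    have hsproj : Set.projIcc (0:ℝ) 1 zero_le_one r = s := Set.projIcc_of_mem _ hr01
    rw [hF] at hFs
    simp only [hsproj] at hFs
    have heq : T (eInd i b) s = T (eInd i (!b)) s := by linarith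
    have hmin := hkey i b s
    have hboth : T (eInd i b) s = 0 := by
      rw [heq, min_self] at hmin
      linarith [heq, hmin]
    have hhs : h s = 0 := by
      have := hsum i b s
      rw [hboth, ← heq, hboth] at this
      linarith
    have := hball s hsball
    linarith
  -- the compact set where h ≥ c, and a finite cover by balls where h > 0
  set K : Set unitInterval := {t | c ≤ h t} with hK
  have hKclosed : IsClosed K := isClosed_le continuous_const h.continuous
  have hKcompact : IsCompact K := hKclosed.isCompact
  have hδsel : ∀ t : unitInterval, ∃ d : ℝ, t ∈ K →
      0 < d ∧ ∀ s : unitInterval, s ∈ ball t d → 0 < h s := by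
    intro t
    by_cases htK : t ∈ K
    · have hpos0 : 0 < h t := lt_of_lt_of_le hc htK
      have hopen : IsOpen {s : unitInterval | 0 < h s} := by
        have : {s : unitInterval | 0 < h s} = h ⁻¹' Set.Ioi 0 := rfl
        rw [this]
        exact IsOpen.preimage h.continuous isOpen_Ioi
      have hmem : {s : unitInterval | 0 < h s} ∈ nhds t := hopen.mem_nhds hpos0
      rw [Metric.mem_nhds_iff] at hmem
      obtain ⟨ε, hε, hsub⟩ := hmem
      exact ⟨ε, fun _ => ⟨hε, fun s hs => hsub hs⟩⟩
    · exact ⟨1, fun hcon => absurd hcon htK⟩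
  choose δ hδ using hδsel
  obtain ⟨F, hFK, hcover⟩ := hKcompact.elim_nhds_subcover (fun t => ball t (δ t))
    (fun t ht => Metric.ball_mem_nhds t (hδ t ht).1)
  -- the "alive bit" point for each center
  set xp : unitInterval → Cantor := fun p i => decide (0 < T (eInd i true) p) with hxp
  have hxppos : ∀ p ∈ K, ∀ i : ℕ, 0 < T (eInd i (xp p i)) p := by
    intro p hpK i
    by_cases h1 : 0 < T (eInd i true) p
    · have : xp p i = true := by simp [hxp, h1]
      rw [this]; exact h1
    · have hb : xp p i = false := by simp [hxp, h1]
      rw [hb]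
      have h2 : T (eInd i true) p = 0 :=
        le_antisymm (not_lt.mp h1) (hpos _ (eInd_nonneg i true) p)
      have h3 := hsum i true p
      simp only [Bool.not_true] at h3
      have : c ≤ h p := hpK
      linarith
  -- the cylinder avoiding all points xp p
  set n : ℕ := F.card with hn
  set σ : {x // x ∈ F} ≃ Fin n := F.equivFin with hσ
  set bit : Fin n → Bool := fun j => !(xp ((σ.symm j) : unitInterval) j.1) with hbit
  set eA : C(Cantor, ℝ) := cylInd n bit with heA
  have hnorm1 : ‖eA‖ = 1 := cylInd_norm n bit
  have hlowA := hlow eA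
  rw [hnorm1, mul_one] at hlowA
  have hsmall : ‖T eA‖ < c := by
    rw [ContinuousMap.norm_lt_iff _ hc]
    intro t
    rw [Real.norm_eq_abs, abs_of_nonneg (hpos _ (cylInd_nonneg n bit) t)]
    by_cases htK : t ∈ K
    · obtain ⟨p, hpF, htball⟩ := Set.mem_iUnion₂.mp (hcover htK)
      have hpK : p ∈ K := hFK p hpF
      set j0 : Fin n := σ ⟨p, hpF⟩ with hj0
      have hbeq : bit j0 = !(xp p j0.1) := by
        simp only [hbit, hj0, Equiv.symm_apply_apply]
      have h1 : 0 < T (eInd j0.1 (xp p j0.1)) p := hxppos p hpK j0.1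
      have h2 : T (eInd j0.1 (!(xp p j0.1))) t ≤ 0 :=
        hdich j0.1 (xp p j0.1) p t (δ p) (hδ p hpK).2 htball h1
      have h3 : eA ≤ eInd j0.1 (bit j0) := cylInd_le_eInd n bit j0
      have h4 : T eA t ≤ T (eInd j0.1 (bit j0)) t :=
        ContinuousMap.le_def.mp (hmono _ _ h3) t
      rw [hbeq] at h4
      linarith
    · have h1 : T eA t ≤ h t := by
        have := hmono eA 1 (cylInd_le_one n bit)
        rw [← hh] at this
        exact ContinuousMap.le_def.mp this t
      have h2 : h t < c := not_le.mp htK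
      linarith
  linarith
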